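/- Conditional law of the data permutation given the unordered collection (proof step of Theorem 1). In the setting where π̂ has law proportional to u on the finite permutation group Π and π̂^{(0)} = π̂, π̂^{(b)} = π̂ ∘ π^{(b)} with π^{(1)},…,π^{(B)} i.i.d. uniform on Π independent of π̂: for any distinct fixed π_0,…,π_B ∈ Π, conditional on the event that the unordered multiset [π̂^{(0)}, π̂^{(1)}, …, π̂^{(B)}] equals [π_0, …, π_B], one has, for every permutation σ of {0,1,…,B}, P( (π̂^{(0)},…,π̂^{(B)}) = (π_{σ(0)},…,π_{σ(B)}) | · ) = u(π_{σ(0)}) / Σ_{σ'∈Π̃} u(π_{σ'(0)}), where Π̃ is the set of all permutations of {0,…,B}; in particular, for each b ∈ {0,…,B}, P( π̂^{(0)} = π_b | [π̂^{(0)},…,π̂^{(B)}] = [π_0,…,π_B] ) = u(π_b) / Σ_{b'=0}^B u(π_{b'}). -/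

import Mathlib

open MeasureTheory ProbabilityTheory
open scoped Classical

/-- Permutations of a finite index set carry the discrete (⊤) σ-algebra. -/
instance instMeasurableSpacePerm (α : Type*) : MeasurableSpace (Equiv.Perm α) := ⊤

instance instMeasurableSingletonClassPerm (α : Type*) :
    MeasurableSingletonClass (Equiv.Perm α) :=
  ⟨fun _ => MeasurableSpace.measurableSet_top⟩

lemma multiset_map_eq_iff {n : ℕ} {α : Type*} [DecidableEq α]
    (f h : Fin n → α) (hh : Function.Injective h) :
    Finset.univ.val.map f = Finset.univ.val.map h ↔
      ∃ σ : Equiv.Perm (Fin n), ∀ b, f b = h (σ b) := by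
  constructor
  · intro heq
    have hnd : (Finset.univ.val.map f).Nodup := by
      rw [heq]; exact Finset.univ.nodup.map hh
    have hfinj : Function.Injective f := by
      intro x y hxy
      exact Multiset.inj_on_of_nodup_map hnd x (Finset.mem_univ x) y (Finset.mem_univ y) hxy
    have hrange : ∀ b, ∃ x, h x = f b := by
      intro b
      have : f b ∈ Finset.univ.val.map h := by
        rw [← heq]; exact Multiset.mem_map_of_mem f (Finset.mem_univ b)
      obtain ⟨x, _, hx⟩ := Multiset.mem_map.mp this
      exact ⟨x, hx⟩
    choose k hk using hrange
    have hkinj : Function.Injective k := by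
      intro x y hxy
      apply hfinj
      rw [← hk x, ← hk y, hxy]
    exact ⟨Equiv.ofBijective k (Finite.injective_iff_bijective.mp hkinj),
      fun b => (hk b).symm⟩
  · rintro ⟨σ, hσ⟩
    have hfe : f = h ∘ σ := funext hσ
    rw [hfe, ← Multiset.map_map]
    congr 1
    have := congr_arg Finset.val (Finset.map_univ_equiv σ)
    simpa [Finset.map_val] using this

theorem conditional_law_given_unordered_collection
    {Ω ι : Type*} [MeasurableSpace Ω] [Fintype ι] [DecidableEq ι]
    (μ : Measure Ω) [IsProbabilityMeasure μ]
    (u : Equiv.Perm ι → ℝ) (hu : ∀ π, 0 ≤ u π) (hupos : 0 < ∑ π, u π)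
    (B : ℕ)
    (πhat : Ω → Equiv.Perm ι) (πs : Fin B → Ω → Equiv.Perm ι)
    (hπhatm : Measurable πhat) (hπsm : ∀ b, Measurable (πs b))
    (hπhat : ∀ π : Equiv.Perm ι,
      μ {ω | πhat ω = π} = ENNReal.ofReal (u π / ∑ π', u π'))
    (hπs : ∀ (b : Fin B) (π : Equiv.Perm ι),
      μ {ω | πs b ω = π} = (Fintype.card (Equiv.Perm ι) : ENNReal)⁻¹)
    (hindep : iIndepFun (m := fun _ => inferInstance)
      (Fin.cons πhat πs : Fin (B + 1) → Ω → Equiv.Perm ι) μ)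
    (g : Fin (B + 1) → Equiv.Perm ι) (hg : Function.Injective g) :
    (∀ σ : Equiv.Perm (Fin (B + 1)),
      ProbabilityTheory.cond μ
          {ω | (Finset.univ.val.map fun b : Fin (B + 1) =>
                  (Fin.cons (πhat ω) (fun b' : Fin B => πhat ω * πs b' ω)
                    : Fin (B + 1) → Equiv.Perm ι) b)
              = Finset.univ.val.map g}
          {ω | ∀ b : Fin (B + 1),
              (Fin.cons (πhat ω) (fun b' : Fin B => πhat ω * πs b' ω)
                  : Fin (B + 1) → Equiv.Perm ι) b = g (σ b)}
        = ENNReal.ofReal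
            (u (g (σ 0)) / ∑ σ' : Equiv.Perm (Fin (B + 1)), u (g (σ' 0))))
    ∧ (∀ b : Fin (B + 1),
      ProbabilityTheory.cond μ
          {ω | (Finset.univ.val.map fun b : Fin (B + 1) =>
                  (Fin.cons (πhat ω) (fun b' : Fin B => πhat ω * πs b' ω)
                    : Fin (B + 1) → Equiv.Perm ι) b)
              = Finset.univ.val.map g}
          {ω | πhat ω = g b}
        = ENNReal.ofReal (u (g b) / ∑ b' : Fin (B + 1), u (g b'))) := by
  classical
  set S : ℝ := ∑ π', u π' with hS
  set X : Ω → Fin (B + 1) → Equiv.Perm ι :=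
    fun ω => Fin.cons (πhat ω) (fun b' => πhat ω * πs b' ω) with hX
  set c : Fin (B + 1) → ENNReal := fun b => ENNReal.ofReal (u (g b) / S) with hc
  set k : ENNReal := ((Fintype.card (Equiv.Perm ι) : ENNReal))⁻¹ ^ B with hk
  set E : Equiv.Perm (Fin (B + 1)) → Set Ω :=
    fun σ => {ω | ∀ b, X ω b = g (σ b)} with hE
  set A : Set Ω :=
    {ω | Finset.univ.val.map (X ω) = Finset.univ.val.map g} with hA
  set t : Equiv.Perm (Fin (B + 1)) → Fin (B + 1) → Equiv.Perm ι :=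
    fun σ => Fin.cons (g (σ 0)) (fun b' => (g (σ 0))⁻¹ * g (σ b'.succ)) with ht
  -- basic finiteness facts
  have hk0 : k ≠ 0 := by
    simp [hk, ENNReal.pow_ne_zero, ENNReal.inv_ne_zero, ENNReal.natCast_ne_top]
  have hktop : k ≠ ⊤ := by
    simp [hk, ENNReal.pow_ne_top, ENNReal.inv_ne_top, Fintype.card_ne_zero]
  -- the event E σ as an intersection of independent-coordinate events
  have hEeq : ∀ σ, E σ =
      ⋂ i ∈ (Finset.univ : Finset (Fin (B + 1))),
        (Fin.cons πhat πs : Fin (B + 1) → Ω → Equiv.Perm ι) i ⁻¹' {t σ i} := by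
    intro σ
    ext ω
    simp only [hE, Set.mem_setOf_eq, Set.mem_iInter, Set.mem_preimage,
      Set.mem_singleton_iff, Finset.mem_univ, forall_true_left]
    constructor
    · intro h i
      have h0 : πhat ω = g (σ 0) := by simpa [hX] using h 0
      induction i using Fin.cases with
      | zero => simpa [ht] using h0
      | succ b' =>
        have hb := h b'.succ
        simp only [hX, Fin.cons_succ] at hb
        simp only [ht, Fin.cons_succ]
        rw [← hb, ← h0, inv_mul_cancel_left]
    · intro h b
      have h0 : πhat ω = g (σ 0) := by simpa [ht] using h 0
      induction b using Fin.cases with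
      | zero => simpa [hX] using h0
      | succ b' =>
        have hb := h b'.succ
        simp only [ht, Fin.cons_succ] at hb
        simp only [hX, Fin.cons_succ]
        rw [hb, h0, mul_inv_cancel_left]
  -- measurability
  have hconsm : ∀ i : Fin (B + 1),
      Measurable ((Fin.cons πhat πs : Fin (B + 1) → Ω → Equiv.Perm ι) i) := by
    intro i
    induction i using Fin.cases with
    | zero => simpa using hπhatm
    | succ b' => simpa using hπsm b'
  have hEm : ∀ σ, MeasurableSet (E σ) := by
    intro σ
    rw [hEeq σ]
    exact Finset.measurableSet_biInter _
      (fun i _ => (hconsm i) (measurableSet_singleton _))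
  -- measure of E σ
  have hμE : ∀ σ, μ (E σ) = c (σ 0) * k := by
    intro σ
    have hprod := hindep.measure_inter_preimage_eq_mul
      (S := Finset.univ) (sets := fun i => {t σ i})
      (fun i _ => MeasurableSpace.measurableSet_top)
    rw [hEeq σ, hprod, Fin.prod_univ_succ]
    have h1 : μ ((Fin.cons πhat πs : Fin (B + 1) → Ω → Equiv.Perm ι) 0 ⁻¹' {t σ 0})
        = c (σ 0) := by
      have he : ((Fin.cons πhat πs : Fin (B + 1) → Ω → Equiv.Perm ι) 0 ⁻¹' {t σ 0})
          = {ω | πhat ω = g (σ 0)} := by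
        ext ω; simp [ht]
      rw [he, hπhat, hc]
    have h2 : ∀ b' : Fin B,
        μ ((Fin.cons πhat πs : Fin (B + 1) → Ω → Equiv.Perm ι) b'.succ ⁻¹' {t σ b'.succ})
          = (Fintype.card (Equiv.Perm ι) : ENNReal)⁻¹ := by
      intro b'
      have he : ((Fin.cons πhat πs : Fin (B + 1) → Ω → Equiv.Perm ι) b'.succ ⁻¹' {t σ b'.succ})
          = {ω | πs b' ω = t σ b'.succ} := by
        ext ω; simp
      rw [he, hπs]
    rw [h1]
    congr 1
    rw [Finset.prod_congr rfl (fun b' _ => h2 b'), Finset.prod_const,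
      Finset.card_univ, Fintype.card_fin, hk]
  -- A is the disjoint union of the E σ
  have hAeq : A = ⋃ σ, E σ := by
    ext ω
    simp only [hA, Set.mem_setOf_eq, Set.mem_iUnion, hE]
    exact multiset_map_eq_iff (X ω) g hg
  have hdisj : Pairwise (Function.onFun Disjoint E) := by
    intro σ σ' hne
    rw [Function.onFun, Set.disjoint_left]
    intro ω hω hω'
    exact hne (Equiv.ext fun b => hg (((hω b).symm.trans (hω' b))))
  have hAm : MeasurableSet A := by
    rw [hAeq]; exact MeasurableSet.iUnion fun σ => hEm σ
  have hμA : μ A = (∑ σ : Equiv.Perm (Fin (B + 1)), c (σ 0)) * k := by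
    rw [hAeq, measure_iUnion hdisj hEm, tsum_fintype]
    simp_rw [hμE]
    rw [← Finset.sum_mul]
  have hDtop : (∑ σ : Equiv.Perm (Fin (B + 1)), c (σ 0)) ≠ ⊤ := by
    refine (ENNReal.sum_lt_top.2 fun σ _ => ?_).ne
    simp [hc]
  -- the key conditional-probability computation
  have key : ∀ (P : Finset (Equiv.Perm (Fin (B + 1)))) (s : Set Ω),
      A ∩ s = ⋃ σ ∈ P, E σ →
      ProbabilityTheory.cond μ A s
        = (∑ σ ∈ P, c (σ 0)) / (∑ σ : Equiv.Perm (Fin (B + 1)), c (σ 0)) := by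
    intro P s hs
    rw [ProbabilityTheory.cond_apply hAm, hs,
      measure_biUnion_finset (fun σ _ σ' _ hne => hdisj hne) (fun σ _ => hEm σ), hμA]
    simp_rw [hμE]
    rw [← Finset.sum_mul, ENNReal.mul_inv (Or.inr hktop) (Or.inl hDtop)]
    set D := ∑ σ : Equiv.Perm (Fin (B + 1)), c (σ 0)
    set DP := ∑ σ ∈ P, c (σ 0)
    calc D⁻¹ * k⁻¹ * (DP * k) = DP * D⁻¹ * (k⁻¹ * k) := by ring
      _ = DP / D := by
          rw [ENNReal.inv_mul_cancel hk0 hktop, mul_one, div_eq_mul_inv]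
  -- sums of c as ofReal
  have hsum_of : ∀ (t' : Finset (Equiv.Perm (Fin (B + 1))))
      (f : Equiv.Perm (Fin (B + 1)) → Fin (B + 1)),
      ∑ j ∈ t', c (f j) = ENNReal.ofReal ((∑ j ∈ t', u (g (f j))) / S) := by
    intro t' f
    rw [Finset.sum_div, ENNReal.ofReal_sum_of_nonneg
      (fun j _ => div_nonneg (hu _) hupos.le)]
  have hsum_of' : ∀ (t' : Finset (Fin (B + 1))) (f : Fin (B + 1) → Fin (B + 1)),
      ∑ j ∈ t', c (f j) = ENNReal.ofReal ((∑ j ∈ t', u (g (f j))) / S) := by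
    intro t' f
    rw [Finset.sum_div, ENNReal.ofReal_sum_of_nonneg
      (fun j _ => div_nonneg (hu _) hupos.le)]
  -- ratio simplification
  have ratio : ∀ (x T : ℝ), 0 ≤ T → (T = 0 → x = 0) →
      ENNReal.ofReal (x / S) / ENNReal.ofReal (T / S) = ENNReal.ofReal (x / T) := by
    intro x T hT h0
    rcases eq_or_lt_of_le hT with heq | hTpos
    · rw [h0 heq.symm, ← heq]
      simp
    · rw [← ENNReal.ofReal_div_of_pos (div_pos hTpos hupos)]
      congr 1
      field_simp
  -- part 1
  have part1 : ∀ σ : Equiv.Perm (Fin (B + 1)),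
      ProbabilityTheory.cond μ A (E σ)
        = ENNReal.ofReal
            (u (g (σ 0)) / ∑ σ' : Equiv.Perm (Fin (B + 1)), u (g (σ' 0))) := by
    intro σ
    have hsub : E σ ⊆ A := by
      rw [hAeq]; exact Set.subset_iUnion E σ
    have h1 : A ∩ E σ = ⋃ σ' ∈ ({σ} : Finset (Equiv.Perm (Fin (B + 1)))), E σ' := by
      simp [Set.inter_eq_right.mpr hsub]
    rw [key {σ} (E σ) h1,
      hsum_of ({σ} : Finset (Equiv.Perm (Fin (B + 1)))) (fun σ' : Equiv.Perm (Fin (B + 1)) => σ' 0),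
      hsum_of Finset.univ (fun σ' : Equiv.Perm (Fin (B + 1)) => σ' 0), Finset.sum_singleton]
    exact ratio _ _ (Finset.sum_nonneg fun _ _ => hu _)
      (fun h0 => (Finset.sum_eq_zero_iff_of_nonneg (fun i _ => hu _)).mp h0 σ
        (Finset.mem_univ σ))
  -- fibers of σ ↦ σ 0 all have the same cardinality
  have hMcard : ∀ b1 b2 : Fin (B + 1),
      (Finset.univ.filter fun σ : Equiv.Perm (Fin (B + 1)) => σ 0 = b1).card
        = (Finset.univ.filter fun σ : Equiv.Perm (Fin (B + 1)) => σ 0 = b2).card := by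
    intro b1 b2
    apply Finset.card_bij' (fun σ _ => Equiv.swap b1 b2 * σ)
      (fun σ _ => Equiv.swap b1 b2 * σ)
    · intro σ hσ
      simp only [Finset.mem_filter, Finset.mem_univ, true_and] at hσ ⊢
      simp [Equiv.Perm.mul_apply, hσ, Equiv.swap_apply_left]
    · intro σ hσ
      simp only [Finset.mem_filter, Finset.mem_univ, true_and] at hσ ⊢
      simp [Equiv.Perm.mul_apply, hσ, Equiv.swap_apply_right]
    · intro σ _
      rw [← mul_assoc, Equiv.swap_mul_self, one_mul]
    · intro σ _
      rw [← mul_assoc, Equiv.swap_mul_self, one_mul]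
  -- part 2
  have part2 : ∀ b : Fin (B + 1),
      ProbabilityTheory.cond μ A {ω | πhat ω = g b}
        = ENNReal.ofReal (u (g b) / ∑ b' : Fin (B + 1), u (g b')) := by
    intro b
    set P : Finset (Equiv.Perm (Fin (B + 1))) :=
      Finset.univ.filter (fun σ => σ 0 = b) with hP
    have hXzero : ∀ ω, X ω 0 = πhat ω := fun ω => rfl
    have h2 : A ∩ {ω | πhat ω = g b} = ⋃ σ ∈ P, E σ := by
      ext ω
      simp only [Set.mem_inter_iff, Set.mem_iUnion, Set.mem_setOf_eq, hP,
        Finset.mem_filter, Finset.mem_univ, true_and, exists_prop]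
      constructor
      · rintro ⟨hA', hb⟩
        rw [hAeq] at hA'
        obtain ⟨σ, hσ⟩ := Set.mem_iUnion.mp hA'
        refine ⟨σ, ?_, hσ⟩
        apply hg
        have h00 : X ω 0 = g (σ 0) := hσ 0
        rw [← h00, hXzero, hb]
      · rintro ⟨σ, h0, hσ⟩
        refine ⟨?_, ?_⟩
        · rw [hAeq]; exact Set.mem_iUnion.mpr ⟨σ, hσ⟩
        · have h00 : X ω 0 = g (σ 0) := hσ 0
          rw [← hXzero, h00, h0]
    have hPne : P.Nonempty := by
      refine ⟨Equiv.swap 0 b, ?_⟩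
      simp [hP, Equiv.swap_apply_left]
    have hDP : ∑ σ ∈ P, c (σ 0) = (P.card : ENNReal) * c b := by
      have he : ∑ σ ∈ P, c (σ 0) = ∑ _σ ∈ P, c b :=
        Finset.sum_congr rfl fun σ hσ => by
          rw [(Finset.mem_filter.mp hσ).2]
      rw [he, Finset.sum_const, nsmul_eq_mul]
    have hD : (∑ σ : Equiv.Perm (Fin (B + 1)), c (σ 0))
        = (P.card : ENNReal) * ∑ b' : Fin (B + 1), c b' := by
      rw [← Finset.sum_fiberwise_of_maps_to
        (g := fun σ : Equiv.Perm (Fin (B + 1)) => σ 0)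
        (fun σ _ => Finset.mem_univ (σ 0)) (fun σ => c (σ 0)),
        Finset.mul_sum]
      refine Finset.sum_congr rfl fun b' _ => ?_
      have he : ∑ σ ∈ Finset.univ.filter
            (fun σ : Equiv.Perm (Fin (B + 1)) => σ 0 = b'), c (σ 0)
          = ∑ _σ ∈ Finset.univ.filter
            (fun σ : Equiv.Perm (Fin (B + 1)) => σ 0 = b'), c b' :=
        Finset.sum_congr rfl fun σ hσ => by
          rw [(Finset.mem_filter.mp hσ).2]
      rw [he, Finset.sum_const, nsmul_eq_mul,
        show (Finset.univ.filter fun σ : Equiv.Perm (Fin (B + 1)) => σ 0 = b').card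
          = P.card from hMcard b' b]
    rw [key P {ω | πhat ω = g b} h2, hDP, hD,
      ENNReal.mul_div_mul_left _ _ (by
        exact_mod_cast Finset.card_ne_zero_of_mem hPne.choose_spec)
        (ENNReal.natCast_ne_top _),
      hsum_of' Finset.univ (fun b' : Fin (B + 1) => b'), hc]
    exact ratio _ _ (Finset.sum_nonneg fun _ _ => hu _)
      (fun h0 => (Finset.sum_eq_zero_iff_of_nonneg (fun i _ => hu _)).mp h0 b
        (Finset.mem_univ b))
  exact ⟨fun σ => part1 σ, fun b => part2 b⟩
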